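/- arXiv:2601.17624 — 2 statements merged into one kernel-verified Lean document; each statement's English description precedes it below -/
import Mathlib

section
/- Let (M,c) be a simple coloured binary matroid with M = M_1 ⊕_2 M_2 (a 2-sum with E(M_1) ∩ E(M_2) a single element s), such that ε(M) > r(M) + 3 and for i = 1,2 the matroid M_i \ E(M_{3−i}) contains a rainbow circuit. Then M contains two disjoint rainbow circuits C_1, C_2 with |C_1| + |C_2| ≤ r(M) + 2. -/
open Matroid
open scoped symmDiff Classical

namespace RainbowPaper

variable {α : Type*} {κ : Type*}

/-- A circuit of a matroid: a minimal dependent set. -/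
def Circuit (M : Matroid α) (C : Set α) : Prop :=
  M.Dep C ∧ ∀ D, D ⊂ C → ¬ M.Dep D

/-- The rank of a set in a matroid: the supremum of the cardinalities of its
independent subsets. -/
noncomputable def rkSet (M : Matroid α) (X : Set α) : ℕ :=
  sSup {n | ∃ I, M.Indep I ∧ I ⊆ X ∧ I.ncard = n}

/-- The rank of a matroid. -/
noncomputable def rk (M : Matroid α) : ℕ := rkSet M M.E

/-- A matroid is simple if every subset of the ground set with at most two
elements is independent (no loops, no parallel pairs). -/
def Simple (M : Matroid α) : Prop := ∀ X ⊆ M.E, X.ncard ≤ 2 → M.Indep X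

/-- A matroid is binary if it is representable over `GF(2)`. -/
def IsBinary (M : Matroid α) : Prop :=
  ∃ (n : ℕ) (φ : α → (Fin n → ZMod 2)),
    ∀ I ⊆ M.E, (M.Indep I ↔ LinearIndependent (ZMod 2) (fun e : I => φ e.1))

/-- A matroid is regular if it is representable over every field. -/
def IsRegular (M : Matroid α) : Prop :=
  ∀ (F : Type) [Field F], ∃ (n : ℕ) (φ : α → (Fin n → F)),
    ∀ I ⊆ M.E, (M.Indep I ↔ LinearIndependent F (fun e : I => φ e.1))

/-- The signed incidence vector of an edge with given endpoints. -/
noncomputable def incVec {V : Type} (p : V × V) : V → ℚ :=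
  fun v => (if v = p.1 then (1 : ℚ) else 0) - (if v = p.2 then (1 : ℚ) else 0)

/-- A matroid is graphic if it is the cycle matroid of a graph, equivalently it is
represented by the signed incidence vectors of the edges of some graph. -/
def IsGraphic (M : Matroid α) : Prop :=
  ∃ (V : Type) (ends : α → V × V),
    ∀ I ⊆ M.E, (M.Indep I ↔ LinearIndependent ℚ (fun e : I => incVec (ends e.1)))

/-- A matroid is cographic if its dual is graphic. -/
def IsCographic (M : Matroid α) : Prop := IsGraphic M✶

/-- The colour class of the colour `s` in the coloured matroid `(M, c)`. -/
def colourClass (M : Matroid α) (c : α → κ) (s : κ) : Set α := {e ∈ M.E | c e = s}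

/-- A rainbow circuit: a circuit on which the colouring is injective. -/
def RainbowCircuit (M : Matroid α) (c : α → κ) (C : Set α) : Prop :=
  Circuit M C ∧ Set.InjOn c C

/-- A coloured matroid is circuit-achromatic if it has no rainbow circuit. -/
def CircuitAchromatic (M : Matroid α) (c : α → κ) : Prop :=
  ∀ C, Circuit M C → ¬ Set.InjOn c C

/-- The union of the first `j` colour classes in an enumeration `f` of the colours. -/
def initialUnion (M : Matroid α) (c : α → κ) {k : ℕ} (f : Fin k → κ) (j : Fin k) : Set α :=
  ⋃ i ∈ Set.Iic j, colourClass M c (f i)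

/-- A colouring of a matroid is stratified if its (nonempty) colour classes can be
enumerated `X_{i_1}, …, X_{i_k}` so that each initial union
`S_j = X_{i_1} ∪ ⋯ ∪ X_{i_j}` is closed and `1 ≤ r(S_1) < r(S_2) < ⋯ < r(S_k) = r(M)`. -/
def Stratified (M : Matroid α) (c : α → κ) : Prop :=
  ∃ (k : ℕ) (f : Fin k → κ),
    Function.Injective f ∧
    (∀ e ∈ M.E, ∃ j, c e = f j) ∧
    (∀ j, (colourClass M c (f j)).Nonempty) ∧
    (∀ j, M.closure (initialUnion M c f j) = initialUnion M c f j) ∧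
    StrictMono (fun j => rkSet M (initialUnion M c f j)) ∧
    (∀ j, 1 ≤ rkSet M (initialUnion M c f j)) ∧
    (∀ j : Fin k, j.val = k - 1 → rkSet M (initialUnion M c f j) = rk M)

/-- A short rainbow circuit pair: two disjoint rainbow circuits whose sizes sum
to at most `r(M) + 2`. -/
def SRCP (M : Matroid α) (c : α → κ) (C₁ C₂ : Set α) : Prop :=
  RainbowCircuit M c C₁ ∧ RainbowCircuit M c C₂ ∧ Disjoint C₁ C₂ ∧
    C₁.ncard + C₂.ncard ≤ rk M + 2

/-- A short rainbow circuit 4-tuple: four rainbow circuits of total size at most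
`2 r(M) + 4` such that no element belongs to more than two of them. -/
def SRC4 (M : Matroid α) (c : α → κ) (C : Fin 4 → Set α) : Prop :=
  (∀ i, RainbowCircuit M c (C i)) ∧
  (∑ i, (C i).ncard) ≤ 2 * rk M + 4 ∧
  (∀ e : α, (Finset.univ.filter (fun i => e ∈ C i)).card ≤ 2)

/-- A cycle of a matroid: a (pairwise) disjoint union of circuits. -/
def IsCycleSet (M : Matroid α) (X : Set α) : Prop :=
  ∃ 𝒞 : Set (Set α), (∀ C ∈ 𝒞, Circuit M C) ∧ 𝒞.PairwiseDisjoint id ∧ X = ⋃₀ 𝒞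

/-- The 2-sum of two binary matroids along a common element `s`, described by its
circuits: circuits of `M` are the circuits of `M₁` or `M₂` avoiding `s`, together with
the sets `(C₁ - s) ∪ (C₂ - s)` for circuits `Cᵢ` of `Mᵢ` containing `s`. -/
def TwoSum (M M₁ M₂ : Matroid α) (s : α) : Prop :=
  M₁.E ∩ M₂.E = {s} ∧ M.E = (M₁.E ∪ M₂.E) \ {s} ∧
  ∀ C, Circuit M C ↔
    ((Circuit M₁ C ∧ s ∉ C) ∨ (Circuit M₂ C ∧ s ∉ C) ∨
      (∃ C₁ C₂, Circuit M₁ C₁ ∧ Circuit M₂ C₂ ∧ s ∈ C₁ ∧ s ∈ C₂ ∧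
        C = (C₁ \ {s}) ∪ (C₂ \ {s})))

section Aux

open Set

variable {M : Matroid α} {C C' D I J K X : Set α} {e x : α}

lemma circuit_diff_singleton_indep (hC : Circuit M C) (hx : x ∈ C) :
    M.Indep (C \ {x}) := by
  have h := hC.2 (C \ {x}) (Set.sdiff_singleton_ssubset.mpr hx)
  exact Matroid.indep_of_not_dep h (Set.diff_subset.trans hC.1.subset_ground)

lemma exists_circuit_of_dep : ∀ (n : ℕ) (X : Set α), X.ncard ≤ n → X.Finite → M.Dep X →
    ∃ C, C ⊆ X ∧ Circuit M C := by
  intro n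
  induction n with
  | zero =>
    intro X hn hfin hdep
    have h0 := (Set.ncard_pos hfin).mpr hdep.nonempty
    omega
  | succ n ih =>
    intro X hn hfin hdep
    by_cases h : ∀ D, D ⊂ X → ¬ M.Dep D
    · exact ⟨X, subset_rfl, hdep, h⟩
    · push_neg at h
      obtain ⟨D, hDX, hDdep⟩ := h
      obtain ⟨C, hCD, hC⟩ := ih D (by have := Set.ncard_lt_ncard hDX hfin; omega)
        (hfin.subset hDX.subset) hDdep
      exact ⟨C, hCD.trans hDX.subset, hC⟩

lemma bddAbove_rkSet_set (hE : M.E.Finite) (X : Set α) :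
    BddAbove {n | ∃ I, M.Indep I ∧ I ⊆ X ∧ I.ncard = n} := by
  refine ⟨M.E.ncard, ?_⟩
  rintro n ⟨I, hI, -, rfl⟩
  exact Set.ncard_le_ncard hI.subset_ground hE

lemma ncard_le_rkSet (hE : M.E.Finite) (hI : M.Indep I) (hIX : I ⊆ X) :
    I.ncard ≤ rkSet M X :=
  le_csSup (bddAbove_rkSet_set hE X) ⟨I, hI, hIX, rfl⟩

lemma exists_indep_rkSet (hE : M.E.Finite) (X : Set α) :
    ∃ I, M.Indep I ∧ I ⊆ X ∧ I.ncard = rkSet M X := by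
  have h := Nat.sSup_mem (s := {n | ∃ I, M.Indep I ∧ I ⊆ X ∧ I.ncard = n})
    ⟨0, ∅, M.empty_indep, Set.empty_subset X, by simp⟩ (bddAbove_rkSet_set hE X)
  exact h

lemma circuit_ncard_le (hE : M.E.Finite) (hC : Circuit M C) (hCX : C ⊆ X) :
    C.ncard ≤ rkSet M X + 1 := by
  obtain ⟨x, hx⟩ := hC.1.nonempty
  have hind := circuit_diff_singleton_indep hC hx
  have h1 : (C \ {x}).ncard ≤ rkSet M X := ncard_le_rkSet hE hind (Set.diff_subset.trans hCX)
  have hfinC : C.Finite := hE.subset hC.1.subset_ground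
  have h2 := Set.ncard_diff_singleton_add_one hx hfinC
  omega

lemma indep_ncard_le_basis (hE : M.E.Finite) (hK : M.Indep K) (hKX : K ⊆ X)
    (hXE : X ⊆ M.E) (hJ : M.IsBasis J X) : K.ncard ≤ J.ncard := by
  obtain ⟨J', hJ', hKJ'⟩ := hK.subset_isBasis_of_subset hKX hXE
  have h1 : K.ncard ≤ J'.ncard :=
    Set.ncard_le_ncard hKJ' (hE.subset (hJ'.indep.subset_ground))
  have h2 : J'.ncard = J.ncard := by
    rw [Set.ncard_def, Set.ncard_def, hJ'.encard_eq_encard hJ]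
  omega

lemma circuit_elim (hE : M.E.Finite) (hC : Circuit M C) (hC' : Circuit M C')
    (hne : C ≠ C') (he : e ∈ C ∩ C') : ∃ K, K ⊆ (C ∪ C') \ {e} ∧ Circuit M K := by
  have hCE := hC.1.subset_ground
  have hC'E := hC'.1.subset_ground
  have hUE : C ∪ C' ⊆ M.E := Set.union_subset hCE hC'E
  have hfinU : (C ∪ C').Finite := hE.subset hUE
  have hf : ∃ f, f ∈ C ∧ f ∉ C' := by
    by_contra h
    push_neg at h
    exact hC'.2 C (HasSubset.Subset.ssubset_of_ne h hne) hC.1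
  obtain ⟨f, hfC, hfC'⟩ := hf
  obtain ⟨J, hJ, hCJ⟩ := (circuit_diff_singleton_indep hC hfC).subset_isBasis_of_subset
      (Set.diff_subset.trans Set.subset_union_left) hUE
  have hfJ : f ∉ J := by
    intro hfJ
    refine hC.1.not_indep (hJ.indep.subset ?_)
    intro y hy
    by_cases hyf : y = f
    · exact hyf ▸ hfJ
    · exact hCJ ⟨hy, hyf⟩
  have hg : ∃ g, g ∈ C' ∧ g ∉ J := by
    by_contra h
    push_neg at h
    exact hC'.1.not_indep (hJ.indep.subset h)
  obtain ⟨g, hgC', hgJ⟩ := hg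
  have hgf : g ≠ f := fun h => hfC' (h ▸ hgC')
  have hdep : M.Dep ((C ∪ C') \ {e}) := by
    rw [Matroid.dep_iff]
    refine ⟨fun hind => ?_, Set.diff_subset.trans hUE⟩
    have h1 : ((C ∪ C') \ {e}).ncard ≤ J.ncard :=
      indep_ncard_le_basis hE hind Set.diff_subset hUE hJ
    have hJsub : J ⊆ ((C ∪ C') \ {f}) \ {g} := by
      intro y hy
      exact ⟨⟨hJ.subset hy, fun h => hfJ (h ▸ hy)⟩, fun h => hgJ (h ▸ hy)⟩
    have h2 : J.ncard ≤ (((C ∪ C') \ {f}) \ {g}).ncard :=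
      Set.ncard_le_ncard hJsub (hfinU.diff.diff)
    have h3 : ((C ∪ C') \ {e}).ncard + 1 = (C ∪ C').ncard :=
      Set.ncard_diff_singleton_add_one (Or.inl he.1) hfinU
    have h4 : (((C ∪ C') \ {f}) \ {g}).ncard + 1 = ((C ∪ C') \ {f}).ncard :=
      Set.ncard_diff_singleton_add_one ⟨Or.inr hgC', hgf⟩ (hfinU.diff)
    have h5 : ((C ∪ C') \ {f}).ncard + 1 = (C ∪ C').ncard :=
      Set.ncard_diff_singleton_add_one (Or.inl hfC) hfinU
    omega
  exact exists_circuit_of_dep _ _ le_rfl (hfinU.diff) hdep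


section Binary

variable {n : ℕ} {φ : α → Fin n → ZMod 2}
variable (hφ : ∀ I ⊆ M.E, (M.Indep I ↔ LinearIndependent (ZMod 2) (fun e : I => φ e.1)))

include hφ

lemma dep_of_sum_zero (S : Finset α) (hSE : ↑S ⊆ M.E) (hne : S.Nonempty)
    (h0 : ∑ x ∈ S, φ x = 0) : M.Dep ↑S := by
  rw [Matroid.dep_iff]
  refine ⟨fun hind => ?_, hSE⟩
  rw [hφ _ hSE] at hind
  classical
  set l : α →₀ ZMod 2 := ⟨S, fun x => if x ∈ S then 1 else 0,
    by intro a; by_cases h : a ∈ S <;> simp [h]⟩ with hl_def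
  have hsup : l.support = S := rfl
  have hl : l ∈ Finsupp.supported (ZMod 2) (ZMod 2) (↑S : Set α) := by
    rw [Finsupp.mem_supported, hsup]
  have hcomb : ∑ i ∈ l.support, l i • φ i = 0 := by
    rw [hsup]
    calc ∑ x ∈ S, l x • φ x = ∑ x ∈ S, φ x :=
          Finset.sum_congr rfl (fun x hx => by
            have : l x = 1 := by simp [hl_def, Finsupp.coe_mk, hx]
            rw [this, one_smul])
      _ = 0 := h0
  have hl0 : l ≠ 0 := by
    obtain ⟨x, hx⟩ := hne
    intro h
    have h1 : l x = 1 := by simp [hl_def, Finsupp.coe_mk, hx]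
    rw [h] at h1
    simp at h1
  have hdep : ¬ LinearIndependent (ZMod 2) (φ ∘ ((↑) : (↑S : Set α) → α)) :=
    (linearDepOn_iff (v := φ) (s := (↑S : Set α))).mpr ⟨l, hl, hcomb, hl0⟩
  exact hdep hind

lemma circuit_sum (hE : M.E.Finite) (hC : Circuit M C) (F : Finset α) (hF : ↑F = C) :
    ∑ x ∈ F, φ x = 0 := by
  have hCE : C ⊆ M.E := hC.1.subset_ground
  have hnli : ¬ LinearIndependent (ZMod 2) (φ ∘ ((↑) : C → α)) := fun h =>
    hC.1.not_indep ((hφ C hCE).mpr h)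
  obtain ⟨l, hl, hsum, hl0⟩ := (linearDepOn_iff (v := φ) (s := C)).mp hnli
  have hsupC : (↑l.support : Set α) ⊆ C := (Finsupp.mem_supported (ZMod 2) l).mp hl
  have hsum' : ∑ x ∈ l.support, φ x = 0 := by
    calc ∑ x ∈ l.support, φ x = ∑ x ∈ l.support, l x • φ x := by
          refine Finset.sum_congr rfl (fun x hx => ?_)
          have hx0 : l x ≠ 0 := Finsupp.mem_support_iff.mp hx
          have hone : ∀ a : ZMod 2, a ≠ 0 → a = 1 := by decide
          have : l x = 1 := hone _ hx0
          rw [this, one_smul]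
      _ = 0 := hsum
  have hne : l.support.Nonempty := Finsupp.support_nonempty_iff.mpr hl0
  have hdep : M.Dep ↑l.support := dep_of_sum_zero hφ l.support (hsupC.trans hCE) hne hsum'
  have heq : (↑l.support : Set α) = C := by
    by_contra hne'
    exact hC.2 _ (HasSubset.Subset.ssubset_of_ne hsupC hne') hdep
  have hFs : F = l.support := Finset.coe_injective (hF.trans heq.symm)
  rw [hFs]
  exact hsum'

end Binary


lemma restrict_circuit {M₀ : Matroid α} {R C : Set α} (hR : R ⊆ M₀.E)
    (hC : Circuit (M₀ ↾ R) C) : Circuit M₀ C ∧ C ⊆ R := by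
  have hCR : C ⊆ R := hC.1.subset_ground
  refine ⟨⟨?_, fun D hD hDdep => hC.2 D hD ?_⟩, hCR⟩
  · rw [Matroid.dep_iff]
    exact ⟨fun hind => hC.1.not_indep (Matroid.restrict_indep_iff.mpr ⟨hind, hCR⟩),
      hCR.trans hR⟩
  · rw [Matroid.dep_iff, Matroid.restrict_ground_eq]
    exact ⟨fun h => hDdep.not_indep (Matroid.restrict_indep_iff.mp h).1, hD.subset.trans hCR⟩

lemma shrink {n : ℕ} {φ : α → Fin n → ZMod 2}
    (hφ : ∀ I ⊆ M.E, (M.Indep I ↔ LinearIndependent (ZMod 2) (fun e : I => φ e.1)))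
    (hE : M.E.Finite) (hsimple : Simple M) {c : α → κ} {A C₁ : Set α}
    (hAE : A ⊆ M.E) (hC₁ : Circuit M C₁) (hC₁A : C₁ ⊆ A) (hinj : Set.InjOn c C₁)
    {e : α} (heA : e ∈ A) (heC : e ∉ C₁) (hcard : rkSet M A + 1 ≤ C₁.ncard) :
    ∃ D, Circuit M D ∧ D ⊆ A ∧ Set.InjOn c D ∧ D.ncard ≤ rkSet M A := by
  classical
  obtain ⟨x₀, hx₀C, hx₀prop⟩ : ∃ x₀ ∈ C₁, ∀ y ∈ C₁ \ {x₀}, c y ≠ c e := by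
    by_cases hcl : ∃ x ∈ C₁, c x = c e
    · obtain ⟨x, hx, hcx⟩ := hcl
      exact ⟨x, hx, fun y hy hceq => hy.2 (hinj hy.1 hx (hceq.trans hcx.symm))⟩
    · push_neg at hcl
      obtain ⟨x, hx⟩ := hC₁.1.nonempty
      exact ⟨x, hx, fun y hy => hcl y hy.1⟩
  set S : Set α := insert e (C₁ \ {x₀}) with hS_def
  have hSA : S ⊆ A := Set.insert_subset heA (Set.diff_subset.trans hC₁A)
  have hfinC₁ : C₁.Finite := hE.subset hC₁.1.subset_ground
  have hfinS : S.Finite := (hfinC₁.diff).insert e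
  have heS : e ∉ C₁ \ {x₀} := fun h => heC h.1
  have hx₀ne : x₀ ≠ e := fun h => heC (h ▸ hx₀C)
  have hcard' : C₁.ncard = rkSet M A + 1 :=
    le_antisymm (circuit_ncard_le hE hC₁ hC₁A) hcard
  have hScard : S.ncard = rkSet M A + 1 := by
    rw [hS_def, Set.ncard_insert_of_notMem heS (hfinC₁.diff)]
    have := Set.ncard_diff_singleton_add_one hx₀C hfinC₁
    omega
  have hSdep : M.Dep S := by
    rw [Matroid.dep_iff]
    refine ⟨fun hind => ?_, hSA.trans hAE⟩
    have := ncard_le_rkSet hE hind hSA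
    omega
  obtain ⟨D, hDS, hD⟩ := exists_circuit_of_dep S.ncard S le_rfl hfinS hSdep
  have heD : e ∈ D := by
    by_contra he'
    have hsub : D ⊆ C₁ \ {x₀} := by
      intro y hy
      rcases hDS hy with rfl | h
      · exact absurd hy he'
      · exact h
    exact hC₁.2 D (ssubset_of_subset_of_ssubset hsub (Set.sdiff_singleton_ssubset.mpr hx₀C)) hD.1
  have hDinj : Set.InjOn c D := by
    have hSinj : Set.InjOn c S := by
      rintro u (rfl | hu) v (rfl | hv) huv
      · rfl
      · exact absurd huv.symm (hx₀prop v hv)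
      · exact absurd huv (hx₀prop u hu)
      · exact hinj hu.1 hv.1 huv
    exact hSinj.mono hDS
  refine ⟨D, hD, hDS.trans hSA, hDinj, ?_⟩
  by_contra hlt
  push_neg at hlt
  have hDcard' : D.ncard ≤ S.ncard := Set.ncard_le_ncard hDS hfinS
  have hDeq : D = S := Set.eq_of_subset_of_ncard_le hDS (by omega) hfinS
  set F₁ : Finset α := hfinC₁.toFinset with hF₁_def
  set T : Finset α := F₁.erase x₀ with hT_def
  have hx₀F : x₀ ∈ F₁ := hfinC₁.mem_toFinset.mpr hx₀C
  have heT : e ∉ T := fun h => heC (hfinC₁.mem_toFinset.mp (Finset.mem_of_mem_erase h))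
  have hsum1 : ∑ x ∈ F₁, φ x = 0 :=
    circuit_sum hφ hE hC₁ F₁ (hfinC₁.coe_toFinset)
  have hFS : ((insert e T : Finset α) : Set α) = D := by
    rw [Finset.coe_insert, hT_def, Finset.coe_erase, hfinC₁.coe_toFinset, hDeq]
  have hsum2 : ∑ x ∈ insert e T, φ x = 0 :=
    circuit_sum hφ hE hD _ hFS
  have h1 : φ x₀ + ∑ x ∈ T, φ x = 0 := by
    rw [hT_def, Finset.add_sum_erase F₁ φ hx₀F]
    exact hsum1
  have h2 : φ e + ∑ x ∈ T, φ x = 0 := by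
    rw [← Finset.sum_insert heT]
    exact hsum2
  have hxe : φ x₀ = φ e := by
    have := h1.trans h2.symm
    exact add_right_cancel this
  have hchar : φ x₀ + φ e = 0 := by
    rw [hxe]
    funext i
    have : ∀ a : ZMod 2, a + a = 0 := by decide
    exact this _
  have hpairE : (({x₀, e} : Finset α) : Set α) ⊆ M.E := by
    intro y hy
    simp only [Finset.coe_insert, Finset.coe_singleton, Set.mem_insert_iff,
      Set.mem_singleton_iff] at hy
    rcases hy with rfl | rfl
    · exact hAE (hC₁A hx₀C)
    · exact hAE heA
  have hpairsum : ∑ x ∈ ({x₀, e} : Finset α), φ x = 0 := by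
    rw [Finset.sum_pair hx₀ne]
    exact hchar
  have hpairdep : M.Dep ↑({x₀, e} : Finset α) :=
    dep_of_sum_zero hφ _ hpairE ⟨x₀, Finset.mem_insert_self _ _⟩ hpairsum
  refine hpairdep.not_indep (hsimple _ hpairE ?_)
  rw [Finset.coe_insert, Finset.coe_singleton]
  exact le_of_eq (Set.ncard_pair hx₀ne)

end Aux

/-- a simple coloured binary matroid which is a 2-sum with more than
`r(M) + 3` elements, each part containing a rainbow circuit, has a short rainbow
circuit pair. -/
theorem srcp_of_twoSum (M M₁ M₂ : Matroid α) (s : α)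
    (hM : IsBinary M) (hfin : M.E.Finite) (hsimple : Simple M)
    (hsum : TwoSum M M₁ M₂ s) (c : α → κ)
    (hsize : rk M + 3 < M.E.ncard)
    (h₁ : ∃ C, Circuit (M₁ ↾ (M₁.E \ M₂.E)) C ∧ Set.InjOn c C)
    (h₂ : ∃ C, Circuit (M₂ ↾ (M₂.E \ M₁.E)) C ∧ Set.InjOn c C) :
    ∃ C₁ C₂, SRCP M c C₁ C₂ := by
  classical
  obtain ⟨nn, φ, hφ⟩ := hM
  obtain ⟨hInter, hEeq, hCirc⟩ := hsum
  have hsE : s ∈ M₁.E ∩ M₂.E := by rw [hInter]; rfl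
  set A := M₁.E \ {s} with hA_def
  set B := M₂.E \ {s} with hB_def
  have hAE : A ⊆ M.E := by
    rw [hEeq]; exact fun x hx => ⟨Or.inl hx.1, hx.2⟩
  have hBE : B ⊆ M.E := by
    rw [hEeq]; exact fun x hx => ⟨Or.inr hx.1, hx.2⟩
  have hAB : ∀ x, x ∈ A → x ∈ B → False := fun x hxA hxB => by
    have hx : x ∈ M₁.E ∩ M₂.E := ⟨hxA.1, hxB.1⟩
    rw [hInter] at hx
    exact hxA.2 hx
  have hEAB : M.E = A ∪ B := by
    rw [hEeq]
    ext x
    constructor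
    · rintro ⟨h | h, hs⟩
      · exact Or.inl ⟨h, hs⟩
      · exact Or.inr ⟨h, hs⟩
    · rintro (⟨h, hs⟩ | ⟨h, hs⟩)
      · exact ⟨Or.inl h, hs⟩
      · exact ⟨Or.inr h, hs⟩
  have hA1 : M₁.E \ M₂.E = A := by
    ext x
    constructor
    · rintro ⟨h1, h2⟩
      exact ⟨h1, fun hs => h2 (by rw [Set.mem_singleton_iff] at hs; exact hs ▸ hsE.2)⟩
    · rintro ⟨h1, h2⟩
      refine ⟨h1, fun hx2 => h2 ?_⟩
      have hx : x ∈ M₁.E ∩ M₂.E := ⟨h1, hx2⟩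
      rw [hInter] at hx
      exact hx
  have hB2 : M₂.E \ M₁.E = B := by
    ext x
    constructor
    · rintro ⟨h1, h2⟩
      exact ⟨h1, fun hs => h2 (by rw [Set.mem_singleton_iff] at hs; exact hs ▸ hsE.1)⟩
    · rintro ⟨h1, h2⟩
      refine ⟨h1, fun hx2 => h2 ?_⟩
      have hx : x ∈ M₁.E ∩ M₂.E := ⟨hx2, h1⟩
      rw [hInter] at hx
      exact hx
  obtain ⟨C₁, hC₁r, hC₁inj⟩ := h₁
  obtain ⟨C₂, hC₂r, hC₂inj⟩ := h₂
  rw [hA1] at hC₁r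
  rw [hB2] at hC₂r
  obtain ⟨hC₁M₁, hC₁A⟩ := restrict_circuit Set.diff_subset hC₁r
  obtain ⟨hC₂M₂, hC₂B⟩ := restrict_circuit Set.diff_subset hC₂r
  have hsC₁ : s ∉ C₁ := fun h => (hC₁A h).2 rfl
  have hsC₂ : s ∉ C₂ := fun h => (hC₂B h).2 rfl
  have hC₁M : Circuit M C₁ := (hCirc C₁).mpr (Or.inl ⟨hC₁M₁, hsC₁⟩)
  have hC₂M : Circuit M C₂ := (hCirc C₂).mpr (Or.inr (Or.inl ⟨hC₂M₂, hsC₂⟩))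
  have hE₁fin : M₁.E.Finite := by
    refine ((hfin.subset hAE).insert s).subset ?_
    intro x hx
    by_cases h : x = s
    · exact h ▸ Set.mem_insert s A
    · exact Set.mem_insert_of_mem s ⟨hx, h⟩
  have hE₂fin : M₂.E.Finite := by
    refine ((hfin.subset hBE).insert s).subset ?_
    intro x hx
    by_cases h : x = s
    · exact h ▸ Set.mem_insert s B
    · exact Set.mem_insert_of_mem s ⟨hx, h⟩
  have hrk : rkSet M M.E = rk M := rfl
  have hab : rkSet M A + rkSet M B ≤ rk M + 1 := by
    obtain ⟨I, hIind, hIA, hIcard⟩ := exists_indep_rkSet hfin A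
    obtain ⟨J, hJind, hJB, hJcard⟩ := exists_indep_rkSet hfin B
    have hIJdisj : Disjoint I J :=
      Set.disjoint_left.mpr (fun {x} h1 h2 => hAB x (hIA h1) (hJB h2))
    have hIJE : I ∪ J ⊆ M.E := Set.union_subset hIind.subset_ground hJind.subset_ground
    have hfinIJ : (I ∪ J).Finite := hfin.subset hIJE
    have hIJcard : (I ∪ J).ncard = I.ncard + J.ncard :=
      Set.ncard_union_eq hIJdisj (hfinIJ.subset Set.subset_union_left)
        (hfinIJ.subset Set.subset_union_right)
    have hmixed : ∀ D, Circuit M D → D ⊆ I ∪ J →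
        ∃ Ca Cb, Circuit M₁ Ca ∧ Circuit M₂ Cb ∧ s ∈ Ca ∧ s ∈ Cb ∧
          D = Ca \ {s} ∪ Cb \ {s} := by
      intro D hD hDU
      rcases (hCirc D).mp hD with ⟨h1, hs⟩ | ⟨h2, hs⟩ | h
      · exfalso
        have hDA : D ⊆ A := fun x hx =>
          ⟨h1.1.subset_ground hx, fun hxs => hs (by rwa [hxs] at hx)⟩
        have hDI : D ⊆ I := fun x hx =>
          (hDU hx).resolve_right (fun hxJ => hAB x (hDA hx) (hJB hxJ))
        exact hD.1.not_indep (hIind.subset hDI)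
      · exfalso
        have hDB : D ⊆ B := fun x hx =>
          ⟨h2.1.subset_ground hx, fun hxs => hs (by rwa [hxs] at hx)⟩
        have hDJ : D ⊆ J := fun x hx =>
          (hDU hx).resolve_left (fun hxI => hAB x (hIA hxI) (hDB hx))
        exact hD.1.not_indep (hJind.subset hDJ)
      · exact h
    have hsubI : ∀ (Ca : Set α), Circuit M₁ Ca → Ca \ {s} ⊆ I ∪ J → Ca \ {s} ⊆ I := by
      intro Ca hCa hsub x hx
      exact (hsub hx).resolve_right
        (fun hxJ => hAB x ⟨hCa.1.subset_ground hx.1, hx.2⟩ (hJB hxJ))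
    have hsubJ : ∀ (Cb : Set α), Circuit M₂ Cb → Cb \ {s} ⊆ I ∪ J → Cb \ {s} ⊆ J := by
      intro Cb hCb hsub x hx
      exact (hsub hx).resolve_left
        (fun hxI => hAB x (hIA hxI) ⟨hCb.1.subset_ground hx.1, hx.2⟩)
    have huniq : ∀ D D', Circuit M D → Circuit M D' → D ⊆ I ∪ J → D' ⊆ I ∪ J →
        D = D' := by
      intro D D' hD hD' hDU hD'U
      obtain ⟨Ca, Cb, hCa, hCb, hsa, hsb, hDeq⟩ := hmixed D hD hDU
      obtain ⟨Ca', Cb', hCa', hCb', hsa', hsb', hD'eq⟩ := hmixed D' hD' hD'U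
      have hPI : Ca \ {s} ⊆ I :=
        hsubI Ca hCa (Set.subset_union_left.trans (hDeq ▸ hDU))
      have hPI' : Ca' \ {s} ⊆ I :=
        hsubI Ca' hCa' (Set.subset_union_left.trans (hD'eq ▸ hD'U))
      have hQJ : Cb \ {s} ⊆ J :=
        hsubJ Cb hCb (Set.subset_union_right.trans (hDeq ▸ hDU))
      have hQJ' : Cb' \ {s} ⊆ J :=
        hsubJ Cb' hCb' (Set.subset_union_right.trans (hD'eq ▸ hD'U))
      by_cases hCaa : Ca = Ca'
      · by_cases hCbb : Cb = Cb'
        · rw [hDeq, hD'eq, hCaa, hCbb]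
        · exfalso
          obtain ⟨K, hKsub, hK⟩ := circuit_elim hE₂fin hCb hCb' hCbb ⟨hsb, hsb'⟩
          have hKJ : K ⊆ J := by
            intro x hx
            rcases (hKsub hx).1 with h | h
            · exact hQJ ⟨h, (hKsub hx).2⟩
            · exact hQJ' ⟨h, (hKsub hx).2⟩
          have hsK : s ∉ K := fun h => (hKsub h).2 rfl
          have hKM : Circuit M K := (hCirc K).mpr (Or.inr (Or.inl ⟨hK, hsK⟩))
          exact hKM.1.not_indep (hJind.subset hKJ)
      · exfalso
        obtain ⟨K, hKsub, hK⟩ := circuit_elim hE₁fin hCa hCa' hCaa ⟨hsa, hsa'⟩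
        have hKI : K ⊆ I := by
          intro x hx
          rcases (hKsub hx).1 with h | h
          · exact hPI ⟨h, (hKsub hx).2⟩
          · exact hPI' ⟨h, (hKsub hx).2⟩
        have hsK : s ∉ K := fun h => (hKsub h).2 rfl
        have hKM : Circuit M K := (hCirc K).mpr (Or.inl ⟨hK, hsK⟩)
        exact hKM.1.not_indep (hIind.subset hKI)
    by_cases hU : M.Indep (I ∪ J)
    · have h := ncard_le_rkSet hfin hU hIJE
      rw [hrk] at h
      omega
    · have hUdep : M.Dep (I ∪ J) := ⟨hU, hIJE⟩
      obtain ⟨D, hDU, hD⟩ := exists_circuit_of_dep (I ∪ J).ncard (I ∪ J) le_rfl hfinIJ hUdep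
      obtain ⟨x, hxD⟩ := hD.1.nonempty
      have hWind : M.Indep ((I ∪ J) \ {x}) := by
        rw [← Matroid.not_dep_iff (Set.diff_subset.trans hIJE)]
        intro hWdep
        obtain ⟨D', hD'W, hD'⟩ :=
          exists_circuit_of_dep ((I ∪ J) \ {x}).ncard _ le_rfl (hfinIJ.diff) hWdep
        have heq : D = D' := huniq D D' hD hD' hDU (hD'W.trans Set.diff_subset)
        exact (hD'W (heq ▸ hxD)).2 rfl
      have h1 := ncard_le_rkSet hfin hWind (Set.diff_subset.trans hIJE)
      rw [hrk] at h1
      have h2 : ((I ∪ J) \ {x}).ncard + 1 = (I ∪ J).ncard :=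
        Set.ncard_diff_singleton_add_one (hDU hxD) hfinIJ
      omega
  have hC₁le : C₁.ncard ≤ rkSet M A + 1 := circuit_ncard_le hfin hC₁M hC₁A
  have hC₂le : C₂.ncard ≤ rkSet M B + 1 := circuit_ncard_le hfin hC₂M hC₂B
  have hdisj : Disjoint C₁ C₂ :=
    Set.disjoint_left.mpr (fun {x} h1 h2 => hAB x (hC₁A h1) (hC₂B h2))
  by_cases hle : C₁.ncard + C₂.ncard ≤ rk M + 2
  · exact ⟨C₁, C₂, ⟨hC₁M, hC₁inj⟩, ⟨hC₂M, hC₂inj⟩, hdisj, hle⟩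
  · push_neg at hle
    have htight₁ : rkSet M A + 1 ≤ C₁.ncard := by omega
    have htight₂ : rkSet M B + 1 ≤ C₂.ncard := by omega
    have hCCsub : C₁ ∪ C₂ ⊆ M.E := Set.union_subset (hC₁A.trans hAE) (hC₂B.trans hBE)
    have hfinCC : (C₁ ∪ C₂).Finite := hfin.subset hCCsub
    have hCCcard : (C₁ ∪ C₂).ncard = C₁.ncard + C₂.ncard :=
      Set.ncard_union_eq hdisj (hfinCC.subset Set.subset_union_left)
        (hfinCC.subset Set.subset_union_right)
    obtain ⟨e, heE, heCC⟩ : ∃ e, e ∈ M.E ∧ e ∉ C₁ ∪ C₂ := by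
      by_contra h
      push_neg at h
      have hsub : M.E ⊆ C₁ ∪ C₂ := h
      have hcard := Set.ncard_le_ncard hsub hfinCC
      omega
    have heAB : e ∈ A ∨ e ∈ B := by rwa [hEAB] at heE
    rcases heAB with heA | heB
    · obtain ⟨D, hD, hDA, hDinj, hDcard⟩ := shrink hφ hfin hsimple hAE hC₁M hC₁A hC₁inj heA
        (fun h => heCC (Or.inl h)) htight₁
      have hdisj' : Disjoint D C₂ :=
        Set.disjoint_left.mpr (fun {x} h1 h2 => hAB x (hDA h1) (hC₂B h2))
      exact ⟨D, C₂, ⟨hD, hDinj⟩, ⟨hC₂M, hC₂inj⟩, hdisj', by omega⟩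
    · obtain ⟨D, hD, hDB, hDinj, hDcard⟩ := shrink hφ hfin hsimple hBE hC₂M hC₂B hC₂inj heB
        (fun h => heCC (Or.inr h)) htight₂
      have hdisj' : Disjoint C₁ D :=
        Set.disjoint_left.mpr (fun {x} h1 h2 => hAB x (hC₁A h1) (hDB h2))
      exact ⟨C₁, D, ⟨hC₁M, hC₁inj⟩, ⟨hD, hDinj⟩, hdisj', by omega⟩
end RainbowPaper
end

section
/- Let G be a graph built as follows: G_1 consists of a single edge e_1 = v_{11}v_{12} of colour 1; for i = 2,...,n−1, G_i is obtained from G_{i−1} by adding a new vertex v_i together with two edges e_{i1} = v_i v_{i1} and e_{i2} = v_i v_{i2}, both of colour i, where v_{i1}, v_{i2} are distinct vertices of G_{i−1}. Set G = G_{n−1}. Then for every pair of distinct vertices u, v of G there is a rainbow path (a path whose edges have pairwise distinct colours) from u to v of length at most ⌊n/2⌋; moreover, when n is even, at most one pair of vertices u,v requires a rainbow path of length exactly n/2. -/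
open scoped Classical

namespace RainbowPaper

/-- The inductively constructed coloured graph on `n + 2` vertices: vertex `0` and
`1` are `v₁₁` and `v₁₂`, joined by the edge of colour `1`; every vertex `i ≥ 2` is
joined to the two distinct earlier vertices `f i` and `g i` by two edges of colour
`i`.  (Since each edge joins a vertex to a strictly smaller one, the colour of an
edge is the larger of its two endpoints.) -/
def constructionGraph (n : ℕ) (f g : Fin (n + 2) → Fin (n + 2)) :
    SimpleGraph (Fin (n + 2)) where
  Adj a b := a ≠ b ∧ (s(a, b) = s(0, 1) ∨
    ∃ i : Fin (n + 2), 2 ≤ i.val ∧ (s(a, b) = s(i, f i) ∨ s(a, b) = s(i, g i)))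
  symm := by
    constructor
    rintro a b ⟨h1, h2⟩
    refine ⟨h1.symm, ?_⟩
    rw [Sym2.eq_swap]
    exact h2
  loopless := ⟨fun a h => h.1 rfl⟩

/-- The hypotheses of the construction: each new vertex `i ≥ 2` is joined to two
distinct earlier vertices. -/
def ConstructionHyp (n : ℕ) (f g : Fin (n + 2) → Fin (n + 2)) : Prop :=
  ∀ i : Fin (n + 2), 2 ≤ i.val → f i < i ∧ g i < i ∧ f i ≠ g i

/-- The colour of an edge of the construction graph: the larger of its two
endpoints (with the initial edge `{0, 1}` getting colour `1`). -/
def edgeColour {n : ℕ} : Sym2 (Fin (n + 2)) → ℕ :=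
  Sym2.lift ⟨fun a b => max a.val b.val, fun a b => by simp [max_comm]⟩

/-- A rainbow path: a path whose edges receive pairwise distinct colours. -/
def IsRainbowPath {V : Type*} (G : SimpleGraph V) (col : Sym2 V → ℕ) {u v : V}
    (p : G.Walk u v) : Prop :=
  p.IsPath ∧ (p.edges.map col).Nodup

/-- Two walks are edge-disjoint if no edge lies on both. -/
def EdgeDisjoint {V : Type*} {G : SimpleGraph V} {u v u' v' : V}
    (p : G.Walk u v) (q : G.Walk u' v') : Prop :=
  ∀ e, e ∈ p.edges → e ∉ q.edges

section Aux

open SimpleGraph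

variable {n : ℕ} {f g : Fin (n + 2) → Fin (n + 2)}

/-- All vertices of the walk have value at most `k`. -/
def Lev {n : ℕ} {G : SimpleGraph (Fin (n + 2))} {u v : Fin (n + 2)} (k : ℕ)
    (p : G.Walk u v) : Prop :=
  ∀ x ∈ p.support, x.val ≤ k

/-- `u` and `v` are a "far pair" at level `k`: every rainbow path between them
staying within vertices `≤ k` has length at least `⌊(k+1)/2⌋`. -/
def Far (n : ℕ) (f g : Fin (n + 2) → Fin (n + 2)) (k : ℕ) (u v : Fin (n + 2)) : Prop :=
  u ≠ v ∧ u.val ≤ k ∧ v.val ≤ k ∧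
    ∀ p : (constructionGraph n f g).Walk u v,
      IsRainbowPath _ edgeColour p → Lev k p → (k + 1) / 2 ≤ p.length

lemma edgeColour_mk (a b : Fin (n + 2)) : edgeColour s(a, b) = max a.val b.val := rfl

lemma colour_le {G : SimpleGraph (Fin (n + 2))} {u v : Fin (n + 2)} {p : G.Walk u v}
    {k : ℕ} (hl : Lev k p) {e : Sym2 (Fin (n + 2))} (he : e ∈ p.edges) :
    edgeColour e ≤ k := by
  induction e using Sym2.ind with
  | _ a b =>
    rw [edgeColour_mk, max_le_iff]
    exact ⟨hl a (p.fst_mem_support_of_mem_edges he),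
      hl b (p.snd_mem_support_of_mem_edges he)⟩

lemma rainbow_reverse {G : SimpleGraph (Fin (n + 2))} {u v : Fin (n + 2)}
    {p : G.Walk u v} (h : IsRainbowPath G edgeColour p) :
    IsRainbowPath G edgeColour p.reverse := by
  refine ⟨h.1.reverse, ?_⟩
  rw [Walk.edges_reverse, List.map_reverse]
  exact List.nodup_reverse.mpr h.2

lemma Far.symm' {k : ℕ} {u v : Fin (n + 2)} (h : Far n f g k u v) : Far n f g k v u := by
  refine ⟨h.1.symm, h.2.2.1, h.2.1, fun p hp hl => ?_⟩
  have := h.2.2.2 p.reverse (rainbow_reverse hp) ?_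
  · rwa [Walk.length_reverse] at this
  · intro x hx
    rw [Walk.support_reverse, List.mem_reverse] at hx
    exact hl x hx

lemma lev_mono {G : SimpleGraph (Fin (n + 2))} {u v : Fin (n + 2)} {p : G.Walk u v}
    {k k' : ℕ} (hkk : k ≤ k') (h : Lev k p) : Lev k' p :=
  fun x hx => le_trans (h x hx) hkk

lemma adj_f (hfg : ConstructionHyp n f g) {i : Fin (n + 2)} (hi : 2 ≤ i.val) :
    (constructionGraph n f g).Adj i (f i) :=
  ⟨((hfg i hi).1).ne', Or.inr ⟨i, hi, Or.inl rfl⟩⟩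

lemma adj_g (hfg : ConstructionHyp n f g) {i : Fin (n + 2)} (hi : 2 ≤ i.val) :
    (constructionGraph n f g).Adj i (g i) :=
  ⟨((hfg i hi).2.1).ne', Or.inr ⟨i, hi, Or.inr rfl⟩⟩

/-- A single edge, as a rainbow path. -/
lemma edge_rainbow {G : SimpleGraph (Fin (n + 2))} {u v : Fin (n + 2)} (h : G.Adj u v) :
    IsRainbowPath G edgeColour (Walk.cons h Walk.nil) ∧
      (Walk.cons h Walk.nil).length = 1 ∧
      (Walk.cons h Walk.nil).support = [u, v] := by
  refine ⟨⟨?_, ?_⟩, by simp, by simp⟩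
  · rw [Walk.cons_isPath_iff]
    exact ⟨Walk.IsPath.nil, by simpa using h.ne⟩
  · simp

/-- Prepending the top edge to a lower-level rainbow path. -/
lemma cons_good {k : ℕ} {K x v : Fin (n + 2)} (hK : K.val = k + 1)
    (h : (constructionGraph n f g).Adj K x) {q : (constructionGraph n f g).Walk x v}
    (hq : IsRainbowPath _ edgeColour q) (hl : Lev k q) :
    IsRainbowPath _ edgeColour (Walk.cons h q) ∧ Lev (k + 1) (Walk.cons h q) := by
  have hKs : K ∉ q.support := fun hm => by have := hl K hm; omega
  have hxk : x.val ≤ k := hl x q.start_mem_support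
  refine ⟨⟨hq.1.cons hKs, ?_⟩, ?_⟩
  · rw [Walk.edges_cons, List.map_cons, List.nodup_cons]
    refine ⟨?_, hq.2⟩
    intro hmem
    rcases List.mem_map.1 hmem with ⟨e, he, hce⟩
    have h1 := colour_le hl he
    have h2 : edgeColour s(K, x) = k + 1 := by
      rw [edgeColour_mk, hK]; omega
    omega
  · intro y hy
    rw [Walk.support_cons, List.mem_cons] at hy
    rcases hy with rfl | hy
    · omega
    · exact le_trans (hl y hy) (by omega)

def Pst (n : ℕ) (f g : Fin (n + 2) → Fin (n + 2)) (k : ℕ) : Prop :=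
  ∀ u v : Fin (n + 2), u.val ≤ k → v.val ≤ k → u ≠ v →
    ∃ p : (constructionGraph n f g).Walk u v,
      IsRainbowPath _ edgeColour p ∧ Lev k p ∧ p.length ≤ (k + 1) / 2

def Ost (n : ℕ) (f g : Fin (n + 2) → Fin (n + 2)) (k : ℕ) : Prop :=
  ∀ u v u' v' : Fin (n + 2), Far n f g k u v → Far n f g k u' v' → s(u, v) = s(u', v')

def Est (n : ℕ) (f g : Fin (n + 2) → Fin (n + 2)) (k : ℕ) : Prop :=
  ∀ a b v w : Fin (n + 2), a ≠ b → v ≠ w → Far n f g k a v → Far n f g k a w →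
    Far n f g k b v → Far n f g k b w → False

lemma main (hfg : ConstructionHyp n f g) :
    ∀ k, k ≤ n + 1 →
      Pst n f g k ∧ (k % 2 = 1 → Ost n f g k) ∧ (k % 2 = 0 → Est n f g k) := by
  intro k
  induction k with
  | zero =>
    intro _
    refine ⟨?_, by omega, ?_⟩
    · intro u v hu hv huv
      exact absurd (Fin.ext (by omega)) huv
    · intro _ a b v w _ _ hav _ _ _
      obtain ⟨hne, h1, h2, -⟩ := hav
      exact hne (Fin.ext (by omega))
  | succ k ih =>
    intro hk
    obtain ⟨ihP, ihO, ihE⟩ := ih (by omega)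
    by_cases hk0 : k = 0
    · subst hk0
      have hpair : ∀ u v : Fin (n + 2), u.val ≤ 1 → v.val ≤ 1 → u ≠ v →
          (constructionGraph n f g).Adj u v ∧ s(u, v) = s((0 : Fin (n + 2)), 1) := by
        intro u v hu hv huv
        have hne : u.val ≠ v.val := fun h => huv (Fin.ext h)
        have h0 : ((0 : Fin (n + 2))).val = 0 := rfl
        have h1 : ((1 : Fin (n + 2))).val = 1 := rfl
        have hcase : (u = (0 : Fin (n + 2)) ∧ v = 1) ∨ (u = 1 ∧ v = 0) := by
          rcases Nat.lt_or_ge u.val 1 with h | h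
          · exact Or.inl ⟨Fin.ext (by omega), Fin.ext (by omega)⟩
          · exact Or.inr ⟨Fin.ext (by omega), Fin.ext (by omega)⟩
        have hsym : s(u, v) = s((0 : Fin (n + 2)), 1) := by
          rcases hcase with ⟨rfl, rfl⟩ | ⟨rfl, rfl⟩
          · rfl
          · exact Sym2.eq_swap
        exact ⟨⟨huv, Or.inl hsym⟩, hsym⟩
      refine ⟨?_, ?_, by omega⟩
      · intro u v hu hv huv
        obtain ⟨hadj, -⟩ := hpair u v hu hv huv
        obtain ⟨hr, hlen, hsup⟩ := edge_rainbow hadj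
        refine ⟨Walk.cons hadj Walk.nil, hr, ?_, by omega⟩
        intro x hx
        rw [hsup] at hx
        simp only [List.mem_cons, List.mem_singleton, List.not_mem_nil, or_false] at hx
        rcases hx with rfl | rfl
        · omega
        · omega
      · intro _ u v u' v' h h'
        have e1 := (hpair u v h.2.1 h.2.2.1 h.1).2
        have e2 := (hpair u' v' h'.2.1 h'.2.2.1 h'.1).2
        rw [e1, e2]
    · -- k ≥ 1
      have hk1 : 1 ≤ k := by omega
      set K : Fin (n + 2) := ⟨k + 1, by omega⟩ with hKdef
      have hKval : K.val = k + 1 := rfl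
      have hK2 : 2 ≤ K.val := by omega
      obtain ⟨hfK, hgK, hfgK⟩ := hfg K hK2
      have hfv : (f K).val ≤ k := by have := (Fin.lt_def).1 hfK; omega
      have hgv : (g K).val ≤ k := by have := (Fin.lt_def).1 hgK; omega
      have hadjf := adj_f hfg hK2
      have hadjg := adj_g hfg hK2
      have hltK : ∀ x : Fin (n + 2), x.val ≤ k + 1 → x ≠ K → x.val ≤ k := by
        intro x hx hxK
        have : x.val ≠ k + 1 := fun h => hxK (Fin.ext h)
        omega
      have key : ∀ v : Fin (n + 2), v ≠ K → v.val ≤ k →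
          ∃ p : (constructionGraph n f g).Walk K v,
            IsRainbowPath _ edgeColour p ∧ Lev (k + 1) p ∧ p.length ≤ (k + 2) / 2 := by
        intro v hvK hv
        by_cases hvf : v = f K
        · subst hvf
          obtain ⟨hr, hlen, hsup⟩ := edge_rainbow hadjf
          refine ⟨_, hr, ?_, by omega⟩
          intro x hx
          rw [hsup] at hx
          simp only [List.mem_cons, List.mem_singleton, List.not_mem_nil, or_false] at hx
          rcases hx with rfl | rfl
          · omega
          · omega
        · by_cases hvg : v = g K
          · subst hvg
            obtain ⟨hr, hlen, hsup⟩ := edge_rainbow hadjg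
            refine ⟨_, hr, ?_, by omega⟩
            intro x hx
            rw [hsup] at hx
            simp only [List.mem_cons, List.mem_singleton, List.not_mem_nil, or_false] at hx
            rcases hx with rfl | rfl
            · omega
            · omega
          · have hchoice : ∃ x : Fin (n + 2), ∃ _ : (constructionGraph n f g).Adj K x,
                ∃ q : (constructionGraph n f g).Walk x v,
                  IsRainbowPath _ edgeColour q ∧ Lev k q ∧ q.length + 1 ≤ (k + 2) / 2 := by
              by_cases hpar : k % 2 = 0
              · obtain ⟨q, hq, hlq, hlen⟩ := ihP (f K) v hfv hv (fun h => hvf h.symm)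
                exact ⟨f K, hadjf, q, hq, hlq, by omega⟩
              · by_cases hFar : Far n f g k (f K) v
                · have hnotg : ¬ Far n f g k (g K) v := by
                    intro hg
                    have := ihO (by omega) _ _ _ _ hFar hg
                    rcases Sym2.eq_iff.1 this with ⟨h1, -⟩ | ⟨h1, h2⟩
                    · exact hfgK h1
                    · exact hvg h2
                  have hne : g K ≠ v := fun h => hvg h.symm
                  have hex : ¬ ∀ p : (constructionGraph n f g).Walk (g K) v,
                      IsRainbowPath _ edgeColour p → Lev k p → (k + 1) / 2 ≤ p.length :=
                    fun hall => hnotg ⟨hne, hgv, hv, hall⟩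
                  push_neg at hex
                  obtain ⟨q, hq, hlq, hlen⟩ := hex
                  exact ⟨g K, hadjg, q, hq, hlq, by omega⟩
                · have hne : f K ≠ v := fun h => hvf h.symm
                  have hex : ¬ ∀ p : (constructionGraph n f g).Walk (f K) v,
                      IsRainbowPath _ edgeColour p → Lev k p → (k + 1) / 2 ≤ p.length :=
                    fun hall => hFar ⟨hne, hfv, hv, hall⟩
                  push_neg at hex
                  obtain ⟨q, hq, hlq, hlen⟩ := hex
                  exact ⟨f K, hadjf, q, hq, hlq, by omega⟩
            obtain ⟨x, hadj, q, hq, hlq, hlen⟩ := hchoice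
            obtain ⟨hr, hlev⟩ := cons_good hKval hadj hq hlq
            refine ⟨Walk.cons hadj q, hr, hlev, ?_⟩
            rw [Walk.length_cons]
            omega
      refine ⟨?_, ?_, ?_⟩
      · -- Pst (k+1)
        intro u v hu hv huv
        by_cases huK : u = K
        · subst huK
          obtain ⟨p, hp, hl, hlen⟩ := key v (Ne.symm huv) (hltK v hv (Ne.symm huv))
          exact ⟨p, hp, hl, by omega⟩
        · by_cases hvK : v = K
          · subst hvK
            obtain ⟨p, hp, hl, hlen⟩ := key u huK (hltK u hu huK)
            refine ⟨p.reverse, rainbow_reverse hp, ?_, ?_⟩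
            · intro x hx
              rw [Walk.support_reverse, List.mem_reverse] at hx
              exact hl x hx
            · rw [Walk.length_reverse]
              omega
          · obtain ⟨p, hp, hl, hlen⟩ := ihP u v (hltK u hu huK) (hltK v hv hvK) huv
            exact ⟨p, hp, lev_mono (by omega) hl, by omega⟩
      · -- Ost (k+1)
        intro hodd
        have hkev : k % 2 = 0 := by omega
        have hE := ihE hkev
        have top : ∀ u v : Fin (n + 2), Far n f g (k + 1) u v → u = K ∨ v = K := by
          intro u v h
          by_contra hcon
          push_neg at hcon
          obtain ⟨p, hp, hl, hlen⟩ :=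
            ihP u v (hltK u h.2.1 hcon.1) (hltK v h.2.2.1 hcon.2) h.1
          have := h.2.2.2 p hp (lev_mono (by omega) hl)
          omega
        have red : ∀ u v : Fin (n + 2), Far n f g (k + 1) u v →
            ∃ v₀, s(u, v) = s(K, v₀) ∧ Far n f g (k + 1) K v₀ := by
          intro u v h
          rcases top u v h with rfl | rfl
          · exact ⟨v, rfl, h⟩
          · exact ⟨u, Sym2.eq_swap, h.symm'⟩
        have sub : ∀ v : Fin (n + 2), Far n f g (k + 1) K v →
            Far n f g k (f K) v ∧ Far n f g k (g K) v := by
          intro v h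
          have hv : v.val ≤ k := hltK v h.2.2.1 (Ne.symm h.1)
          have hvf : v ≠ f K := by
            intro h'
            subst h'
            obtain ⟨hr, hlen, hsup⟩ := edge_rainbow hadjf
            have hb := h.2.2.2 (Walk.cons hadjf Walk.nil) hr (by
              intro x hx
              rw [hsup] at hx
              simp only [List.mem_cons, List.mem_singleton, List.not_mem_nil,
                or_false] at hx
              rcases hx with rfl | rfl
              · omega
              · omega)
            rw [hlen] at hb
            omega
          have hvg : v ≠ g K := by
            intro h'
            subst h'
            obtain ⟨hr, hlen, hsup⟩ := edge_rainbow hadjg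
            have hb := h.2.2.2 (Walk.cons hadjg Walk.nil) hr (by
              intro x hx
              rw [hsup] at hx
              simp only [List.mem_cons, List.mem_singleton, List.not_mem_nil,
                or_false] at hx
              rcases hx with rfl | rfl
              · omega
              · omega)
            rw [hlen] at hb
            omega
          constructor
          · refine ⟨Ne.symm hvf, hfv, hv, fun q hq hl => ?_⟩
            obtain ⟨hr, hlev⟩ := cons_good hKval hadjf hq hl
            have hb := h.2.2.2 (Walk.cons hadjf q) hr hlev
            rw [Walk.length_cons] at hb
            omega
          · refine ⟨Ne.symm hvg, hgv, hv, fun q hq hl => ?_⟩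
            obtain ⟨hr, hlev⟩ := cons_good hKval hadjg hq hl
            have hb := h.2.2.2 (Walk.cons hadjg q) hr hlev
            rw [Walk.length_cons] at hb
            omega
        intro u v u' v' h h'
        obtain ⟨v₀, he, h0⟩ := red u v h
        obtain ⟨v₀', he', h0'⟩ := red u' v' h'
        rw [he, he']
        suffices hvv : v₀ = v₀' by rw [hvv]
        by_contra hvv
        obtain ⟨hf0, hg0⟩ := sub v₀ h0
        obtain ⟨hf0', hg0'⟩ := sub v₀' h0'
        exact hE (f K) (g K) v₀ v₀' hfgK hvv hf0 hf0' hg0 hg0'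
      · -- Est (k+1)
        intro heven
        have hko : k % 2 = 1 := by omega
        have hO := ihO hko
        have trans : ∀ x y : Fin (n + 2), Far n f g (k + 1) x y → x ≠ K → y ≠ K →
            Far n f g k x y := by
          intro x y h hx hy
          refine ⟨h.1, hltK x h.2.1 hx, hltK y h.2.2.1 hy, fun p hp hl => ?_⟩
          have := h.2.2.2 p hp (lev_mono (by omega) hl)
          omega
        have key2 : ∀ x y z : Fin (n + 2), y ≠ z → Far n f g (k + 1) x y →
            Far n f g (k + 1) x z → x ≠ K → y ≠ K → z ≠ K → False := by
          intro x y z hyz h1 h2 hx hy hz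
          have := hO _ _ _ _ (trans x y h1 hx hy) (trans x z h2 hx hz)
          rcases Sym2.eq_iff.1 this with ⟨-, h4⟩ | ⟨h3, h4⟩
          · exact hyz h4
          · exact h1.1 h4.symm
        intro a b v w hab hvw hav haw hbv hbw
        by_cases haK : a = K
        · subst haK
          exact key2 b v w hvw hbv hbw (Ne.symm hab) (Ne.symm hav.1) (Ne.symm haw.1)
        · by_cases hbK : b = K
          · subst hbK
            exact key2 a v w hvw hav haw haK (Ne.symm hbv.1) (Ne.symm hbw.1)
          · by_cases hvK : v = K
            · subst hvK
              exact key2 w a b hab haw.symm' hbw.symm' (Ne.symm hvw) haK hbK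
            · by_cases hwK : w = K
              · subst hwK
                exact key2 v a b hab hav.symm' hbv.symm' hvw haK hbK
              · exact key2 a v w hvw hav haw haK hvK hwK

end Aux

/-- in the construction graph on `n + 2` vertices, any two distinct
vertices are joined by a rainbow path of length at most `⌊(n+2)/2⌋`; moreover when
`n + 2` is even, at most one pair of vertices requires length exactly `(n+2)/2`. -/
theorem rainbow_distance (n : ℕ) (f g : Fin (n + 2) → Fin (n + 2))
    (hfg : ConstructionHyp n f g) :
    (∀ u v : Fin (n + 2), u ≠ v →
      ∃ p : (constructionGraph n f g).Walk u v,
        IsRainbowPath _ edgeColour p ∧ p.length ≤ (n + 2) / 2) ∧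
    (2 ∣ (n + 2) → ∀ u v u' v' : Fin (n + 2), u ≠ v → u' ≠ v' →
      (∀ p : (constructionGraph n f g).Walk u v,
        IsRainbowPath _ edgeColour p → (n + 2) / 2 ≤ p.length) →
      (∀ p : (constructionGraph n f g).Walk u' v',
        IsRainbowPath _ edgeColour p → (n + 2) / 2 ≤ p.length) →
      s(u, v) = s(u', v')) := by
  obtain ⟨hP, hO, -⟩ := main hfg (n + 1) le_rfl
  constructor
  · intro u v huv
    obtain ⟨p, hp, -, hlen⟩ := hP u v (by have := u.isLt; omega) (by have := v.isLt; omega) huv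
    exact ⟨p, hp, by omega⟩
  · intro hdvd u v u' v' huv huv' hreq hreq'
    have hodd : (n + 1) % 2 = 1 := by omega
    refine hO hodd u v u' v' ⟨huv, by have := u.isLt; omega, by have := v.isLt; omega,
      fun p hp _ => by have := hreq p hp; omega⟩
      ⟨huv', by have := u'.isLt; omega, by have := v'.isLt; omega,
      fun p hp _ => by have := hreq' p hp; omega⟩
end RainbowPaper
end
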